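/- Suppose μ(B_r(p)) ≤ C·r^{a}·e^{-2φ̲_p(r)} for all r ≥ r₁, where a = 2(n-m+1) > 0, C > 0, and φ̲_p(r) := inf_{B_r(p)} φ. If ∫_{r₀}^∞ exp(2φ̲_p(r)/(n-m)) dr = +∞ for some r₀ > 0, then ∫_{r₂}^∞ r dr / log μ(B_r(p)) = +∞ for suitable r₂, i.e., Grigor'yan's volume test for stochastic completeness holds. -/

import Mathlib

open Set Filter MeasureTheory

/-- Grigor'yan volume test: Suppose the volume function V(r) = μ(B_r(p))
satisfies 1 < V(r) and V(r) ≤ C·r^a·e^{-2φ̲_p(r)} for r ≥ r₁, where a = 2(n-m+1) > 0,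
C > 0, and φ̲_p is nonincreasing. If ∫_{r₀}^∞ e^{2φ̲_p(r)/(n-m)} dr = +∞ for some
r₀ > 0, then ∫_{r₂}^∞ r dr / log V(r) = +∞ for a suitable r₂. -/
theorem grigoryan_volume_test
    (n m C r₀ r₁ : ℝ) (hnm : 0 < n - m) (hC : 0 < C) (hr₀ : 0 < r₀) (hr₁ : 0 < r₁)
    (V φlow : ℝ → ℝ)
    (hVmono : MonotoneOn V (Ioi 0))
    (hφmono : Antitone φlow)
    (hV1 : ∀ r, r₁ ≤ r → 1 < V r)
    (hVbound : ∀ r, r₁ ≤ r →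
      V r ≤ C * r ^ (2 * (n - m + 1)) * Real.exp (-2 * φlow r))
    (hdiv : ¬ IntegrableOn (fun r => Real.exp (2 * φlow r / (n - m))) (Ioi r₀) volume) :
    ∃ r₂ > (0:ℝ), ¬ IntegrableOn (fun r => r / Real.log (V r)) (Ioi r₂) volume := by
  have hφmeas : Measurable φlow := hφmono.measurable
  set a : ℝ := 2 * (n - m + 1) with ha_def
  have ha : 0 < a := by rw [ha_def]; nlinarith
  set ε : ℝ := Real.exp (-2 * φlow r₁ / (n - m)) with hε_def
  have hε : 0 < ε := Real.exp_pos _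
  set g : ℝ → ℝ := fun r => Real.exp (2 * φlow r / (n - m)) with hg_def
  have hgpos : ∀ r, 0 < g r := fun r => Real.exp_pos _
  have hgmeas : Measurable g := ((hφmeas.const_mul 2).div_const (n - m)).exp
  -- eventual bound : log C + a log r ≤ ε r
  have h1 : ∀ᶠ r in atTop, Real.log C + a * Real.log r ≤ ε * r := by
    have h := (Real.isLittleO_log_id_atTop).def (show (0:ℝ) < ε / (2 * a) by positivity)
    filter_upwards [h, eventually_ge_atTop (1 : ℝ),
      eventually_ge_atTop (2 * |Real.log C| / ε)] with r hlo hr1 hr2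
    have hlogr : 0 ≤ Real.log r := Real.log_nonneg hr1
    rw [Real.norm_eq_abs, id, Real.norm_eq_abs, abs_of_nonneg hlogr,
      abs_of_nonneg (by linarith : (0:ℝ) ≤ r)] at hlo
    have halog : a * Real.log r ≤ ε / 2 * r := by
      have := mul_le_mul_of_nonneg_left hlo ha.le
      calc a * Real.log r ≤ a * (ε / (2 * a) * r) := this
        _ = ε / 2 * r := by field_simp
    have hClog : Real.log C ≤ ε / 2 * r := by
      have h1 : Real.log C ≤ |Real.log C| := le_abs_self _
      have h2 : 2 * |Real.log C| / ε ≤ r := hr2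
      have h3 : 2 * |Real.log C| ≤ ε * r := by
        rw [div_le_iff₀ hε] at h2; linarith
      linarith [abs_nonneg (Real.log C)]
    linarith
  obtain ⟨R, hR⟩ := eventually_atTop.mp h1
  set r₂ : ℝ := max (max R r₁) (max r₀ 1) with hr₂def
  have hr₂pos : 0 < r₂ :=
    lt_of_lt_of_le one_pos (le_max_of_le_right (le_max_right _ _))
  refine ⟨r₂, hr₂pos, ?_⟩
  intro hf
  -- key pointwise bound on Ioi r₂ : g r ≤ (1 + (n-m)) * (r / log (V r))
  have key : ∀ r ∈ Ioi r₂, g r ≤ (1 + (n - m)) * (r / Real.log (V r)) := by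
    intro r hr
    have hrr₂ : r₂ < r := hr
    have hrR : R ≤ r := le_trans (le_max_of_le_left (le_max_left _ _)) hrr₂.le
    have hrr₁ : r₁ ≤ r := le_trans (le_max_of_le_left (le_max_right _ _)) hrr₂.le
    have hr1 : (1:ℝ) ≤ r := le_trans (le_max_of_le_right (le_max_right _ _)) hrr₂.le
    have hrpos : (0:ℝ) < r := lt_of_lt_of_le one_pos hr1
    have hVgt : 1 < V r := hV1 r hrr₁
    have hlogV : 0 < Real.log (V r) := Real.log_pos hVgt
    have hrpow : (0:ℝ) < r ^ a := Real.rpow_pos_of_pos hrpos a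
    set E : ℝ := Real.exp (-2 * φlow r / (n - m)) with hE_def
    have hEpos : 0 < E := Real.exp_pos _
    have hEg : E * g r = 1 := by
      rw [hE_def, hg_def, ← Real.exp_add,
        show -2 * φlow r / (n - m) + 2 * φlow r / (n - m) = 0 by ring, Real.exp_zero]
    -- log V r ≤ log C + a log r - 2 φlow r
    have hlogVle : Real.log (V r) ≤ Real.log C + a * Real.log r + (-2 * φlow r) := by
      calc Real.log (V r) ≤ Real.log (C * r ^ a * Real.exp (-2 * φlow r)) := by
            apply Real.log_le_log (by linarith) (hVbound r hrr₁)
        _ = Real.log C + a * Real.log r + (-2 * φlow r) := by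
            rw [Real.log_mul (by positivity) (Real.exp_ne_zero _),
              Real.log_mul hC.ne' hrpow.ne', Real.log_rpow hrpos, Real.log_exp]
    -- ε ≤ E
    have hεE : ε ≤ E := by
      rw [hε_def, hE_def]
      apply Real.exp_le_exp.mpr
      have hφ : φlow r ≤ φlow r₁ := hφmono hrr₁
      rw [div_le_div_iff_of_pos_right hnm]
      linarith
    -- -2 φlow r ≤ (n - m) * E
    have hx : -2 * φlow r ≤ (n - m) * E := by
      have h1 : -2 * φlow r / (n - m) + 1 ≤ E := Real.add_one_le_exp _
      have h2 : -2 * φlow r = (n - m) * (-2 * φlow r / (n - m)) := by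
        field_simp
      nlinarith
    have hεr : Real.log C + a * Real.log r ≤ ε * r := hR r hrR
    have hfinal : Real.log (V r) ≤ (1 + (n - m)) * r * E := by
      have h2 : ε * r ≤ r * E := by nlinarith
      have h3 : (n - m) * E ≤ (n - m) * E * r := by
        nlinarith [mul_nonneg (mul_pos hnm hEpos).le (by linarith : (0:ℝ) ≤ r - 1)]
      nlinarith [h3, hx, hlogVle, hεr, h2]
    -- conclude
    have hmain : g r ≤ ((1 + (n - m)) * r) / Real.log (V r) := by
      rw [le_div_iff₀ hlogV]
      calc g r * Real.log (V r) ≤ g r * ((1 + (n - m)) * r * E) :=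
            mul_le_mul_of_nonneg_left hfinal (hgpos r).le
        _ = (1 + (n - m)) * r * (E * g r) := by ring
        _ = (1 + (n - m)) * r := by rw [hEg]; ring
    rwa [mul_div_assoc] at hmain
  -- g is not integrable on Ioi r₂
  have hr₀₂ : r₀ ≤ r₂ := le_max_of_le_right (le_max_left _ _)
  have hgdiv : ¬ IntegrableOn g (Ioi r₂) volume := by
    intro hgi
    apply hdiv
    have hunion : Ioc r₀ r₂ ∪ Ioi r₂ = Ioi r₀ := Ioc_union_Ioi_eq_Ioi hr₀₂
    rw [← hunion]
    refine IntegrableOn.union ?_ hgi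
    apply Measure.integrableOn_of_bounded (M := g r₀)
    · exact measure_Ioc_lt_top.ne
    · exact hgmeas.aestronglyMeasurable
    · filter_upwards [ae_restrict_mem measurableSet_Ioc] with x hx
      rw [Real.norm_eq_abs, abs_of_nonneg (hgpos x).le]
      apply Real.exp_le_exp.mpr
      have : φlow x ≤ φlow r₀ := hφmono hx.1.le
      rw [div_le_div_iff_of_pos_right hnm]
      linarith
  apply hgdiv
  refine Integrable.mono (hf.const_mul (1 + (n - m))) hgmeas.aestronglyMeasurable ?_
  filter_upwards [ae_restrict_mem measurableSet_Ioi] with r hr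
  rw [Real.norm_eq_abs, Real.norm_eq_abs, abs_of_nonneg (hgpos r).le]
  exact (key r hr).trans (le_abs_self _)
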